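/- In the quadrangulation q = Φ_n(τ, U) produced by Schaeffer's bijection from a well-labeled tree (τ, U) ∈ 𝒲⁺_n, for any two vertices u, v of τ, the graph distance satisfies the upper bound d_gr(u, v) ≤ U(u) + U(v) − 2·min{U(v_k) : i ≤ k ≤ j} + 2, where i ≤ j are any contour indices with v_i = u and v_j = v. -/

import Mathlib

/-- A plane tree: a finite set of finite sequences of positive integers (here modelled as
lists of naturals with entries `≥ 1`), containing the root `[]`, closed under taking parents
(dropping the last coordinate), and such that the children of `u` present in the tree
are exactly `u ++ [j]` for `1 ≤ j ≤ k_u`. -/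
structure PlaneTree where
  verts : Finset (List ℕ)
  root_mem : ([] : List ℕ) ∈ verts
  parent_mem : ∀ v ∈ verts, v ≠ ([] : List ℕ) → v.dropLast ∈ verts
  children : ∀ u ∈ verts, ∃ k : ℕ, ∀ j : ℕ, (u ++ [j]) ∈ verts ↔ 1 ≤ j ∧ j ≤ k

/-- The number of children `k_u(τ)` of a vertex `u` in the plane tree `τ`. -/
def PlaneTree.numChildren (τ : PlaneTree) (u : List ℕ) : ℕ :=
  (τ.verts.filter (fun v => v ≠ [] ∧ v.dropLast = u)).card

/-- The set of edges of `τ`: pairs `(π(v), v)` for `v ∈ τ \ {∅}`. -/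
def PlaneTree.edges (τ : PlaneTree) : Finset (List ℕ × List ℕ) :=
  (τ.verts.erase []).image (fun v => (v.dropLast, v))

/-- The set `∂τ` of leaves of `τ` different from the root. -/
def PlaneTree.leaves (τ : PlaneTree) : Finset (List ℕ) :=
  τ.verts.filter (fun v => v ≠ [] ∧ τ.numChildren v = 0)

open scoped Classical

/-- The successor of a corner `i` in Schaeffer's construction:
`succ(i) = min{ j ≥ i : U(v_j) = U(v_i) − 1 }` (the contour sequence `v` being extended
periodically). -/
noncomputable def succCorner (U : List ℕ → ℤ) (v : ℕ → List ℕ) (i : ℕ) : ℕ :=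
  sInf {j : ℕ | i ≤ j ∧ U (v j) = U (v i) - 1}

/-- The arcs of Schaeffer's construction: the corner `i` (with vertex `v_i`) is joined to the
extra vertex `∂` (encoded by `none`) if `U(v_i) = 0`, and to the corner `succ(i)` otherwise. -/
noncomputable def cornerEdge (U : List ℕ → ℤ) (v : ℕ → List ℕ) (i : ℕ) :
    Option (List ℕ) × Option (List ℕ) :=
  (some (v i), if U (v i) = 0 then none else some (v (succCorner U v i)))

/-- The graph of the quadrangulation `Φ_n(τ, U)` built by Schaeffer's bijection: its vertices
are the vertices of the tree together with `∂` (encoded by `none`), two vertices being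
adjacent when some arc of the construction joins them. -/
noncomputable def schaefferGraph (n : ℕ) (U : List ℕ → ℤ) (v : ℕ → List ℕ) :
    SimpleGraph (Option (List ℕ)) where
  Adj x y := x ≠ y ∧ ∃ i < 2 * n, cornerEdge U v i = (x, y) ∨ cornerEdge U v i = (y, x)
  symm := ⟨by
    rintro x y ⟨hne, i, hi, h⟩
    exact ⟨hne.symm, i, hi, h.symm⟩⟩
  loopless := ⟨fun x h => h.1 rfl⟩

lemma my_ivt (f : ℕ → ℤ) (hstep : ∀ l, |f (l+1) - f l| ≤ 1)
    (i L : ℕ) (hiL : i ≤ L) (t : ℤ) (h1 : t ≤ f i) (h2 : f L ≤ t) :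
    ∃ l, i ≤ l ∧ l ≤ L ∧ f l = t := by
  classical
  set S : Set ℕ := {l | i ≤ l ∧ f l ≤ t} with hS
  have hLS : L ∈ S := ⟨hiL, h2⟩
  have hne : S.Nonempty := ⟨L, hLS⟩
  obtain ⟨hi0, hf0⟩ := Nat.sInf_mem hne
  refine ⟨sInf S, hi0, Nat.sInf_le hLS, ?_⟩
  rcases eq_or_lt_of_le hi0 with h | h
  · exact le_antisymm hf0 (h ▸ h1)
  · have hpos : 0 < sInf S := lt_of_le_of_lt (Nat.zero_le i) h
    obtain ⟨l0, heq⟩ : ∃ l0, sInf S = l0 + 1 := ⟨sInf S - 1, by omega⟩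
    have hl0 : l0 ∉ S := Nat.notMem_of_lt_sInf (by omega)
    rw [heq] at hf0 ⊢
    have hl0i : i ≤ l0 := by omega
    have : t < f l0 := by
      by_contra hc
      exact hl0 ⟨hl0i, le_of_not_gt hc⟩
    have := hstep l0
    rw [abs_le] at this
    omega


/-- Bound on distances in the quadrangulation `q = Φ_n(τ, U)` built by Schaeffer's bijection:
for contour indices `i ≤ j`, the graph distance between `v_i` and `v_j` in `q` is at most
`U(v_i) + U(v_j) − 2 min{U(v_k) : i ≤ k ≤ j} + 2`. -/
theorem stmt_14 (n : ℕ) (hn : 1 ≤ n) (τ : PlaneTree) (hcard : τ.verts.card = n + 1)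
    (v : ℕ → List ℕ) (hv0 : v 0 = []) (hper : ∀ i, v (i + 2 * n) = v i)
    (hmem : ∀ i, v i ∈ τ.verts)
    (hstep : ∀ i, ((v (i + 1)).dropLast = v i ∧ v (i + 1) ≠ []) ∨
      ((v i).dropLast = v (i + 1) ∧ v i ≠ []))
    (hsurj : ∀ w ∈ τ.verts, ∃ i < 2 * n, v i = w)
    (hcount : ∀ w ∈ τ.verts, ((Finset.range (2 * n)).filter (fun i => v i = w)).card
      = τ.numChildren w + (if w = [] then 0 else 1))
    (U : List ℕ → ℤ) (hU0 : U [] = 0)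
    (hinc : ∀ w ∈ τ.verts, w ≠ [] → |U w - U w.dropLast| ≤ 1)
    (hpos : ∀ w ∈ τ.verts, 0 ≤ U w) :
    ∀ i j : ℕ, ∀ hij : i ≤ j,
      ((schaefferGraph n U v).dist (some (v i)) (some (v j)) : ℤ)
        ≤ U (v i) + U (v j)
          - 2 * ((Finset.Icc i j).image (fun k => U (v k))).min'
              (Finset.Nonempty.image (Finset.nonempty_Icc.mpr hij) _)
          + 2 := by
  have hN : 0 < 2 * n := by omega
  set G := schaefferGraph n U v with hG
  have hfstep : ∀ l, |U (v (l+1)) - U (v l)| ≤ 1 := by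
    intro l
    rcases hstep l with ⟨h1, h2⟩ | ⟨h1, h2⟩
    · have := hinc (v (l+1)) (hmem _) h2
      rwa [h1] at this
    · have := hinc (v l) (hmem _) h2
      rw [h1] at this
      rwa [abs_sub_comm] at this
  have hposc : ∀ l, 0 ≤ U (v l) := fun l => hpos _ (hmem l)
  have hvmul : ∀ q i : ℕ, v (i + q * (2*n)) = v i := by
    intro q
    induction q with
    | zero => intro i; simp
    | succ q ih =>
      intro i
      have h : i + (q+1) * (2*n) = (i + q * (2*n)) + 2*n := by ring
      rw [h, hper, ih]
  have hexists : ∀ i : ℕ, ∀ t : ℤ, 0 ≤ t → t ≤ U (v i) → ∃ l, i ≤ l ∧ U (v l) = t := by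
    intro i t ht hti
    have hL : v (0 + (i+1) * (2*n)) = []  := by rw [hvmul, hv0]
    rw [zero_add] at hL
    have hle : i + 1 ≤ (i+1) * (2*n) := Nat.le_mul_of_pos_right (i+1) hN
    obtain ⟨l, hl1, _, hl3⟩ := my_ivt (fun l => U (v l)) hfstep i ((i+1)*(2*n))
      (by omega) t hti (show U (v ((i+1)*(2*n))) ≤ t by rw [hL, hU0]; exact ht)
    exact ⟨l, hl1, hl3⟩
  have hsuccSpec : ∀ i : ℕ, (∃ j, i ≤ j ∧ U (v j) = U (v i) - 1) →
      i ≤ succCorner U v i ∧ U (v (succCorner U v i)) = U (v i) - 1 := by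
    intro i h
    exact Nat.sInf_mem h
  have hsuccMin : ∀ i j : ℕ, i ≤ j → U (v j) = U (v i) - 1 → succCorner U v i ≤ j :=
    fun i j h1 h2 => Nat.sInf_le ⟨h1, h2⟩
  have hsucc_shift : ∀ i : ℕ, (∃ j, i ≤ j ∧ U (v j) = U (v i) - 1) →
      succCorner U v (i + 2*n) = succCorner U v i + 2*n := by
    intro i h
    obtain ⟨hs1, hs2⟩ := hsuccSpec i h
    have hUi : U (v (i + 2*n)) = U (v i) := by rw [hper]
    have h1 : succCorner U v (i + 2*n) ≤ succCorner U v i + 2*n := by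
      apply Nat.sInf_le
      refine ⟨by omega, ?_⟩
      rw [hper (succCorner U v i), hUi]
      exact hs2
    have hmemS : (succCorner U v i + 2*n) ∈ {j : ℕ | i + 2*n ≤ j ∧ U (v j) = U (v (i + 2*n)) - 1} := by
      refine ⟨by omega, ?_⟩
      rw [hper (succCorner U v i), hUi]
      exact hs2
    obtain ⟨ht1, ht2⟩ : i + 2*n ≤ succCorner U v (i + 2*n) ∧
        U (v (succCorner U v (i + 2*n))) = U (v (i + 2*n)) - 1 :=
      Nat.sInf_mem ⟨_, hmemS⟩
    have e2 : (succCorner U v (i + 2*n) - 2*n) + 2*n = succCorner U v (i + 2*n) := by omega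
    have hj2 : U (v (succCorner U v (i + 2*n) - 2*n)) = U (v i) - 1 := by
      rw [← hper (succCorner U v (i + 2*n) - 2*n), e2, ht2, hUi]
    have h2 := hsuccMin i (succCorner U v (i + 2*n) - 2*n) (by omega) hj2
    omega
  have adj_succ : ∀ i : ℕ, U (v i) ≠ 0 → (∃ j, i ≤ j ∧ U (v j) = U (v i) - 1) →
      G.Adj (some (v i)) (some (v (succCorner U v i))) := by
    intro i
    induction i using Nat.strong_induction_on with
    | _ i ih =>
      intro hne0 hex
      by_cases hi : i < 2*n
      · obtain ⟨_, hs2⟩ := hsuccSpec i hex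
        refine ⟨?_, i, (by omega : i < 2 * n), Or.inl ?_⟩
        · intro hcontra
          have heq : v i = v (succCorner U v i) := Option.some.inj hcontra
          rw [← heq] at hs2
          omega
        · unfold cornerEdge
          rw [if_neg hne0]
      · have hvv : v i = v (i - 2*n) := by
          conv_lhs => rw [show i = (i - 2*n) + 2*n from by omega]
          rw [hper]
        have hex' : ∃ j, i - 2*n ≤ j ∧ U (v j) = U (v (i - 2*n)) - 1 := by
          obtain ⟨j, hj1, hj2⟩ := hex
          exact ⟨j, by omega, by rw [← hvv]; exact hj2⟩
        have hshift := hsucc_shift (i - 2*n) hex'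
        rw [show (i - 2*n) + 2*n = i from by omega] at hshift
        have hvs : v (succCorner U v i) = v (succCorner U v (i - 2*n)) := by
          rw [hshift, hper]
        rw [hvv, hvs]
        exact ih (i - 2*n) (by omega) (by rw [← hvv]; exact hne0) hex'
  have adj_root : ∀ i : ℕ, U (v i) = 0 → G.Adj (some (v i)) none := by
    intro i
    induction i using Nat.strong_induction_on with
    | _ i ih =>
      intro h0
      by_cases hi : i < 2*n
      · refine ⟨by simp, i, (by omega : i < 2 * n), Or.inl ?_⟩
        unfold cornerEdge
        rw [if_pos h0]
      · have hvv : v i = v (i - 2*n) := by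
          conv_lhs => rw [show i = (i - 2*n) + 2*n from by omega]
          rw [hper]
        rw [hvv]
        exact ih (i - 2*n) (by omega) (by rw [← hvv]; exact h0)
  have walk_chain : ∀ d : ℕ, ∀ i : ℕ, ∀ m : ℤ, 0 ≤ m → U (v i) - m = (d : ℤ) →
      ∃ p : G.Walk (some (v i)) (some (v (sInf {l | i ≤ l ∧ U (v l) = m}))), p.length = d := by
    intro d
    induction d with
    | zero =>
      intro i m hm hd
      have heq : U (v i) = m := by omega
      have hmemS : i ∈ {l | i ≤ l ∧ U (v l) = m} := ⟨le_refl i, heq⟩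
      have h1 : sInf {l | i ≤ l ∧ U (v l) = m} = i :=
        le_antisymm (Nat.sInf_le hmemS) (Nat.sInf_mem ⟨i, hmemS⟩).1
      exact ⟨SimpleGraph.Walk.nil.copy rfl (by rw [h1]), by simp⟩
    | succ d ih =>
      intro i m hm hd
      have hUi : U (v i) = m + d + 1 := by omega
      have hne0 : U (v i) ≠ 0 := by omega
      have hex : ∃ j, i ≤ j ∧ U (v j) = U (v i) - 1 :=
        hexists i (U (v i) - 1) (by omega) (by omega)
      obtain ⟨hs1, hs2⟩ := hsuccSpec i hex
      have hadj := adj_succ i hne0 hex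
      have hsets : {l | i ≤ l ∧ U (v l) = m} = {l | succCorner U v i ≤ l ∧ U (v l) = m} := by
        ext l
        simp only [Set.mem_setOf_eq]
        constructor
        · rintro ⟨hl1, hl2⟩
          refine ⟨?_, hl2⟩
          by_contra hc
          push_neg at hc
          obtain ⟨l', hl'1, hl'2, hl'3⟩ := my_ivt (fun k => U (v k)) hfstep i l hl1
            (U (v i) - 1) (show U (v i) - 1 ≤ U (v i) by omega)
            (show U (v l) ≤ U (v i) - 1 by omega)
          have := hsuccMin i l' hl'1 hl'3
          omega
        · rintro ⟨hl1, hl2⟩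
          exact ⟨le_trans hs1 hl1, hl2⟩
      have hUs : U (v (succCorner U v i)) - m = (d : ℤ) := by omega
      obtain ⟨p, hp⟩ := ih (succCorner U v i) m hm hUs
      refine ⟨(SimpleGraph.Walk.cons hadj p).copy rfl (by rw [hsets]), ?_⟩
      simp [hp]
  intro i j hij
  set M := ((Finset.Icc i j).image (fun k => U (v k))).min'
      (Finset.Nonempty.image (Finset.nonempty_Icc.mpr hij) _) with hM
  have hMmem := Finset.min'_mem ((Finset.Icc i j).image (fun k => U (v k)))
      (Finset.Nonempty.image (Finset.nonempty_Icc.mpr hij) _)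
  rw [← hM] at hMmem
  obtain ⟨k, hk1, hk2⟩ := Finset.mem_image.mp hMmem
  obtain ⟨hk3, hk4⟩ := Finset.mem_Icc.mp hk1
  have hM0 : 0 ≤ M := hk2 ▸ hposc k
  have hlb : ∀ l, i ≤ l → l ≤ j → M ≤ U (v l) := fun l h1 h2 =>
    Finset.min'_le _ _ (Finset.mem_image.mpr ⟨l, Finset.mem_Icc.mpr ⟨h1, h2⟩, rfl⟩)
  have hMi : M ≤ U (v i) := hlb i le_rfl hij
  have hMj : M ≤ U (v j) := hlb j hij le_rfl
  have hSane : ({l | i ≤ l ∧ U (v l) = M} : Set ℕ).Nonempty := ⟨k, hk3, hk2⟩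
  have hSbne : ({l | j ≤ l ∧ U (v l) = M} : Set ℕ).Nonempty := by
    obtain ⟨l, hl1, hl2⟩ := hexists j M hM0 hMj
    exact ⟨l, hl1, hl2⟩
  set a := sInf {l | i ≤ l ∧ U (v l) = M} with ha
  set b := sInf {l | j ≤ l ∧ U (v l) = M} with hb
  obtain ⟨ha1, ha2⟩ : i ≤ a ∧ U (v a) = M := Nat.sInf_mem hSane
  obtain ⟨hb1, hb2⟩ : j ≤ b ∧ U (v b) = M := Nat.sInf_mem hSbne
  have haj : a ≤ j := le_trans (Nat.sInf_le (show k ∈ {l | i ≤ l ∧ U (v l) = M} from ⟨hk3, hk2⟩)) hk4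
  obtain ⟨p1, hp1⟩ := walk_chain (U (v i) - M).toNat i M hM0
    (by rw [Int.toNat_of_nonneg (by omega)])
  obtain ⟨p2, hp2⟩ := walk_chain (U (v j) - M).toNat j M hM0
    (by rw [Int.toNat_of_nonneg (by omega)])
  have hmid : ∃ q : G.Walk (some (v a)) (some (v b)), q.length = 2 := by
    by_cases hM0' : M = 0
    · have h1 : G.Adj (some (v a)) none := adj_root a (by rw [ha2, hM0'])
      have h2 : G.Adj (some (v b)) none := adj_root b (by rw [hb2, hM0'])
      exact ⟨SimpleGraph.Walk.cons h1 (SimpleGraph.Walk.cons h2.symm SimpleGraph.Walk.nil), rfl⟩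
    · have hexa : ∃ l, a ≤ l ∧ U (v l) = U (v a) - 1 := by
        obtain ⟨l, hl1, hl2⟩ := hexists a (M - 1) (by omega) (by omega)
        exact ⟨l, hl1, by rw [ha2]; exact hl2⟩
      have hexb : ∃ l, b ≤ l ∧ U (v l) = U (v b) - 1 := by
        obtain ⟨l, hl1, hl2⟩ := hexists b (M - 1) (by omega) (by omega)
        exact ⟨l, hl1, by rw [hb2]; exact hl2⟩
      have h1 : G.Adj (some (v a)) (some (v (succCorner U v a))) := adj_succ a (by omega) hexa
      have h2 : G.Adj (some (v b)) (some (v (succCorner U v b))) := adj_succ b (by omega) hexb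
      have hseq : succCorner U v a = succCorner U v b := by
        unfold succCorner
        rw [ha2, hb2]
        congr 1
        ext l
        simp only [Set.mem_setOf_eq]
        constructor
        · rintro ⟨hl1, hl2⟩
          refine ⟨?_, hl2⟩
          have hlj : j < l := by
            by_contra hc
            push_neg at hc
            have := hlb l (le_trans ha1 hl1) hc
            omega
          by_contra hc
          push_neg at hc
          obtain ⟨l', hl'1, hl'2, hl'3⟩ := my_ivt (fun k => U (v k)) hfstep j l (le_of_lt hlj)
            M hMj (show U (v l) ≤ M by omega)
          have : b ≤ l' := Nat.sInf_le ⟨hl'1, hl'3⟩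
          omega
        · rintro ⟨hl1, hl2⟩
          exact ⟨le_trans (le_trans haj hb1) hl1, hl2⟩
      have h2' : G.Adj (some (v (succCorner U v a))) (some (v b)) := by
        rw [hseq]; exact h2.symm
      exact ⟨SimpleGraph.Walk.cons h1 (SimpleGraph.Walk.cons h2' SimpleGraph.Walk.nil), rfl⟩
  obtain ⟨q, hq⟩ := hmid
  have hfinal := SimpleGraph.dist_le (p1.append (q.append p2.reverse))
  rw [SimpleGraph.Walk.length_append, SimpleGraph.Walk.length_append,
    SimpleGraph.Walk.length_reverse, hp1, hp2, hq] at hfinal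
  have hcast : ((G.dist (some (v i)) (some (v j)) : ℕ) : ℤ)
      ≤ ((U (v i) - M).toNat : ℤ) + (2 + ((U (v j) - M).toNat : ℤ)) := by
    exact_mod_cast hfinal
  rw [Int.toNat_of_nonneg (by omega : (0:ℤ) ≤ U (v i) - M),
    Int.toNat_of_nonneg (by omega : (0:ℤ) ≤ U (v j) - M)] at hcast
  omega
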